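/- If C is a clutter whose edge ideal I(C) is not a prime ideal, then v(I(C)) ≤ i(C) ≤ β_0(C), where i(C) = min{ |A| : A a maximal stable set of C } is the independent domination number of C and β_0(C) = max{ |A| : A a stable set of C } is the independence number of C. -/

import Mathlib

open MvPolynomial

attribute [local instance] Classical.propDecidable

/-- The v-number of a graded ideal `I` of a polynomial ring: the least `d ≥ 1` such that
there is a homogeneous polynomial `f` of degree `d` and an associated prime `p` of `S/I`
with `(I : f) = p`; by convention it is `0` when `I` is the ideal generated by the variables. -/
noncomputable def vNumber {K : Type*} [Field K] {σ : Type*}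
    (I : Ideal (MvPolynomial σ K)) : ℕ :=
  if I = Ideal.span (Set.range (X : σ → MvPolynomial σ K)) then 0
  else sInf {d : ℕ | 1 ≤ d ∧ ∃ f : MvPolynomial σ K, f.IsHomogeneous d ∧
    ∃ p ∈ associatedPrimes (MvPolynomial σ K) (MvPolynomial σ K ⧸ I),
      Submodule.colon I (Ideal.span {f}) = p}

/-- A squarefree monomial ideal: an ideal generated by squarefree monomials,
i.e. by products of distinct variables. -/
def IsSquarefreeMonomialIdeal {K : Type*} [Field K] {σ : Type*}
    (I : Ideal (MvPolynomial σ K)) : Prop :=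
  ∃ E : Set (Finset σ), I = Ideal.span ((fun e : Finset σ => ∏ i ∈ e, X i) '' E)

/-- A clutter on the vertex set `Fin s`: a family of edges, none of which contains another. -/
structure Clutter (s : ℕ) where
  edges : Finset (Finset (Fin s))
  antichain : ∀ e ∈ edges, ∀ f ∈ edges, e ⊆ f → e = f

namespace Clutter

variable {s : ℕ} (C : Clutter s)

/-- The edge ideal of a clutter. -/
noncomputable def edgeIdeal (K : Type*) [Field K] : Ideal (MvPolynomial (Fin s) K) :=
  Ideal.span ((fun e : Finset (Fin s) => ∏ i ∈ e, X i) '' C.edges)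

/-- A stable (independent) set of a clutter: a set of vertices containing no edge. -/
def Stable (A : Finset (Fin s)) : Prop := ∀ e ∈ C.edges, ¬ (e ⊆ A)

/-- A maximal stable set of a clutter. -/
def MaximalStable (A : Finset (Fin s)) : Prop :=
  C.Stable A ∧ ∀ B : Finset (Fin s), C.Stable B → A ⊆ B → A = B

/-- The neighbor set `N_C(A)`: all vertices `i` such that `{i} ∪ A` contains an edge. -/
noncomputable def neighborSet (A : Finset (Fin s)) : Finset (Fin s) :=
  Finset.univ.filter (fun i => ∃ e ∈ C.edges, e ⊆ insert i A)

/-- A vertex cover of a clutter: a set of vertices meeting every edge. -/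
def IsVertexCover (B : Finset (Fin s)) : Prop := ∀ e ∈ C.edges, ∃ i ∈ e, i ∈ B

/-- A minimal vertex cover: a vertex cover minimal with respect to inclusion. -/
def IsMinimalVertexCover (B : Finset (Fin s)) : Prop :=
  C.IsVertexCover B ∧ ∀ B' ⊂ B, ¬ C.IsVertexCover B'

/-- The independence number `β₀(C)`: the maximum size of a stable set. -/
noncomputable def indepNum : ℕ := sSup {n : ℕ | ∃ A : Finset (Fin s), C.Stable A ∧ A.card = n}

/-- The independent domination number `i(C)`: the minimum size of a maximal stable set. -/
noncomputable def idomNum : ℕ :=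
  sInf {n : ℕ | ∃ A : Finset (Fin s), C.MaximalStable A ∧ A.card = n}

/-- The vertex covering number `α₀(C)`: the minimum size of a vertex cover. -/
noncomputable def coverNum : ℕ :=
  sInf {n : ℕ | ∃ B : Finset (Fin s), C.IsVertexCover B ∧ B.card = n}

/-- The ideal of covers of a clutter, generated by the monomials of the minimal vertex covers. -/
noncomputable def coverIdeal (K : Type*) [Field K] : Ideal (MvPolynomial (Fin s) K) :=
  Ideal.span ((fun B : Finset (Fin s) => ∏ i ∈ B, X i) '' {B | C.IsMinimalVertexCover B})

/-- The clutter is well-covered if every maximal stable set has maximum cardinality `β₀(C)`. -/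
def WellCovered : Prop := ∀ A : Finset (Fin s), C.MaximalStable A → A.card = C.indepNum

/-- Deletion of an edge from a clutter. -/
def deleteEdge (e : Finset (Fin s)) : Clutter s :=
  ⟨C.edges.erase e, fun a ha b hb hab =>
    C.antichain a (Finset.mem_of_mem_erase ha) b (Finset.mem_of_mem_erase hb) hab⟩

/-- An edge-critical clutter: deleting any edge increases the independence number. -/
def EdgeCritical : Prop := ∀ e ∈ C.edges, C.indepNum < (C.deleteEdge e).indepNum

end Clutter

section Graphs

variable {V : Type*}

/-- The edge ideal of a simple graph. -/
noncomputable def gEdgeIdeal (K : Type*) [Field K] (G : SimpleGraph V) :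
    Ideal (MvPolynomial V K) :=
  Ideal.span {m : MvPolynomial V K | ∃ i j : V, G.Adj i j ∧ m = X i * X j}

/-- A stable (independent) set of vertices of a graph. -/
def gStable (G : SimpleGraph V) (A : Finset V) : Prop := ∀ i ∈ A, ∀ j ∈ A, ¬ G.Adj i j

/-- A maximal stable set of a graph. -/
def gMaximalStable (G : SimpleGraph V) (A : Finset V) : Prop :=
  gStable G A ∧ ∀ B : Finset V, gStable G B → A ⊆ B → A = B

/-- The independence number `β₀(G)`. -/
noncomputable def gIndepNum [Fintype V] (G : SimpleGraph V) : ℕ :=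
  sSup {n : ℕ | ∃ A : Finset V, gStable G A ∧ A.card = n}

/-- A maximum stable set: a stable set of maximum cardinality `β₀(G)`. -/
def gMaximumStable [Fintype V] (G : SimpleGraph V) (A : Finset V) : Prop :=
  gStable G A ∧ A.card = gIndepNum G

/-- The independent domination number `i(G)`: minimum size of a maximal stable set. -/
noncomputable def gIdomNum (G : SimpleGraph V) : ℕ :=
  sInf {n : ℕ | ∃ A : Finset V, gMaximalStable G A ∧ A.card = n}

/-- A well-covered graph: every maximal stable set is a maximum stable set. -/
def gWellCovered [Fintype V] (G : SimpleGraph V) : Prop :=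
  ∀ A : Finset V, gMaximalStable G A → A.card = gIndepNum G

/-- The class `W₂`: graphs with at least two vertices in which any two disjoint stable sets
are contained in two disjoint maximum stable sets. -/
def W2 [Fintype V] (G : SimpleGraph V) : Prop :=
  2 ≤ Fintype.card V ∧ ∀ A B : Finset V, gStable G A → gStable G B → Disjoint A B →
    ∃ A' B' : Finset V, gMaximumStable G A' ∧ gMaximumStable G B' ∧ Disjoint A' B' ∧
      A ⊆ A' ∧ B ⊆ B'

/-- The neighbor set of a set of vertices of a graph: all vertices adjacent to a vertex of `A`. -/
noncomputable def gNeighborSet [Fintype V] (G : SimpleGraph V) (A : Finset V) : Finset V :=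
  Finset.univ.filter (fun i => ∃ j ∈ A, G.Adj i j)

/-- A vertex cover of a graph. -/
def gIsVertexCover (G : SimpleGraph V) (B : Finset V) : Prop :=
  ∀ i j : V, G.Adj i j → i ∈ B ∨ j ∈ B

/-- A minimal vertex cover of a graph. -/
def gIsMinimalVertexCover (G : SimpleGraph V) (B : Finset V) : Prop :=
  gIsVertexCover G B ∧ ∀ B' ⊂ B, ¬ gIsVertexCover G B'

/-- An edge-critical graph: deleting any edge increases the independence number. -/
def gEdgeCritical [Fintype V] (G : SimpleGraph V) : Prop :=
  ∀ i j : V, G.Adj i j → gIndepNum G < gIndepNum (G.deleteEdges {s(i, j)})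

end Graphs


section AuxLemmas

open MvPolynomial

/-- Exponent finsupp of a finset of variables. -/
noncomputable def expSet {σ : Type*} (A : Finset σ) : σ →₀ ℕ :=
  ∑ i ∈ A, Finsupp.single i 1

lemma expSet_apply {σ : Type*} (A : Finset σ) (j : σ) :
    expSet A j = if j ∈ A then 1 else 0 := by
  classical
  rw [expSet, Finset.sum_apply']
  simp [Finsupp.single_apply]

lemma expSet_mono {σ : Type*} {A B : Finset σ} (h : A ⊆ B) : expSet A ≤ expSet B := by
  classical
  intro i
  rw [expSet_apply, expSet_apply]
  by_cases hi : i ∈ A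
  · simp [hi, h hi]
  · simp [hi]

lemma prod_X_expSet {K : Type*} [CommSemiring K] {σ : Type*} (A : Finset σ) :
    (∏ i ∈ A, X i : MvPolynomial σ K) = monomial (expSet A) 1 := by
  classical
  induction A using Finset.induction_on with
  | empty => simp [expSet, monomial_zero', C_1]
  | @insert a A h ih =>
      have hexp : expSet (insert a A) = Finsupp.single a 1 + expSet A := by
        rw [expSet, Finset.sum_insert h]; rfl
      have hX : (X a : MvPolynomial σ K) = monomial (Finsupp.single a 1) 1 := rfl
      rw [Finset.prod_insert h, ih, hexp, hX, monomial_mul, one_mul]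

lemma isPrime_span_X_image {K : Type*} [Field K] {σ : Type*} (B : Set σ) :
    (Ideal.span ((X : σ → MvPolynomial σ K) '' B)).IsPrime := by
  classical
  let φ : MvPolynomial σ K →+* MvPolynomial σ K :=
    (aeval (fun i => if i ∈ B then 0 else X i) :
      MvPolynomial σ K →ₐ[K] MvPolynomial σ K).toRingHom
  have key : ∀ g : MvPolynomial σ K,
      g - φ g ∈ Ideal.span ((X : σ → MvPolynomial σ K) '' B) := by
    intro g
    induction g using MvPolynomial.induction_on with
    | C a => simp [φ]
    | add p q hp hq =>
        have h := Ideal.add_mem _ hp hq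
        have heq : p + q - φ (p + q) = (p - φ p) + (q - φ q) := by
          rw [map_add]; ring
        rw [heq]; exact h
    | mul_X p i hp =>
        by_cases hi : i ∈ B
        · have hXi : (X i : MvPolynomial σ K) ∈
              Ideal.span ((X : σ → MvPolynomial σ K) '' B) :=
            Ideal.subset_span ⟨i, hi, rfl⟩
          have heq : p * X i - φ (p * X i) = p * X i := by
            simp [φ, hi]
          rw [heq]; exact Ideal.mul_mem_left _ p hXi
        · have heq : p * X i - φ (p * X i) = (p - φ p) * X i := by
            simp only [φ, map_mul, AlgHom.toRingHom_eq_coe, RingHom.coe_coe, aeval_X,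
              if_neg hi]
            ring
          rw [heq]; exact Ideal.mul_mem_right _ _ hp
  have hker : Ideal.span ((X : σ → MvPolynomial σ K) '' B) = RingHom.ker φ := by
    apply le_antisymm
    · rw [Ideal.span_le]
      rintro x ⟨i, hi, rfl⟩
      simp [RingHom.mem_ker, φ, hi]
    · intro g hg
      have h := key g
      rwa [RingHom.mem_ker.mp hg, sub_zero] at h
  rw [hker]
  exact RingHom.ker_isPrime φ

lemma annihilator_eq_colon {K : Type*} [Field K] {σ : Type*}
    (I : Ideal (MvPolynomial σ K)) (f : MvPolynomial σ K) :
    (Submodule.span (MvPolynomial σ K) {(Ideal.Quotient.mk I) f}).annihilator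
      = Submodule.colon I (Ideal.span {f}) := by
  ext r
  rw [Submodule.mem_annihilator_span_singleton, Ideal.mem_colon_span_singleton]
  have hs : r • (Ideal.Quotient.mk I) f = Ideal.Quotient.mk I (r * f) := by
    rw [map_mul, ← Ideal.Quotient.algebraMap_eq, ← Algebra.smul_def]
  rw [hs, Ideal.Quotient.eq_zero_iff_mem]

lemma Clutter.exists_maximalStable_superset {s : ℕ} (C : Clutter s) (A₀ : Finset (Fin s))
    (h : C.Stable A₀) : ∃ A, C.MaximalStable A ∧ A₀ ⊆ A := by
  classical
  obtain ⟨A, hA, hmax⟩ := Finset.exists_max_image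
    (Finset.univ.powerset.filter fun B => C.Stable B ∧ A₀ ⊆ B) Finset.card
    ⟨A₀, by simp [h]⟩
  simp only [Finset.mem_filter, Finset.mem_powerset] at hA
  refine ⟨A, ⟨hA.2.1, fun B hB hAB => ?_⟩, hA.2.2⟩
  have hBmem : B ∈ Finset.univ.powerset.filter fun B => C.Stable B ∧ A₀ ⊆ B := by
    simp only [Finset.mem_filter, Finset.mem_powerset]
    exact ⟨Finset.subset_univ B, hB, hA.2.2.trans hAB⟩
  exact Finset.eq_of_subset_of_card_le hAB (hmax B hBmem)

end AuxLemmas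

/-- If the edge ideal of a clutter `C` is not prime, then
`v(I(C)) ≤ i(C) ≤ β₀(C)`. -/
theorem vNumber_le_idomNum_le_indepNum {K : Type*} [Field K] {s : ℕ}
    (C : Clutter s) (hI : ¬ (C.edgeIdeal K).IsPrime) :
    vNumber (C.edgeIdeal K) ≤ C.idomNum ∧ C.idomNum ≤ C.indepNum := by
  classical
  by_cases hempty : (∅ : Finset (Fin s)) ∈ C.edges
  · -- degenerate case: the edge ideal is the unit ideal
    have htop : C.edgeIdeal K = ⊤ := by
      rw [Ideal.eq_top_iff_one]
      exact Ideal.subset_span ⟨∅, hempty, by simp⟩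
    have hnostable : ∀ A : Finset (Fin s), ¬ C.Stable A := fun A hA =>
      hA ∅ hempty (Finset.empty_subset A)
    have hidom : C.idomNum = 0 := by
      rw [Clutter.idomNum]
      have hset : {n : ℕ | ∃ A : Finset (Fin s), C.MaximalStable A ∧ A.card = n} = ∅ := by
        rw [Set.eq_empty_iff_forall_notMem]
        rintro n ⟨A, ⟨hst, _⟩, _⟩
        exact hnostable A hst
      rw [hset, Nat.sInf_empty]
    have hindep : C.indepNum = 0 := by
      rw [Clutter.indepNum]
      have hset : {n : ℕ | ∃ A : Finset (Fin s), C.Stable A ∧ A.card = n} = ∅ := by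
        rw [Set.eq_empty_iff_forall_notMem]
        rintro n ⟨A, hst, _⟩
        exact hnostable A hst
      rw [hset, csSup_empty]
      rfl
    have hsub : Subsingleton (MvPolynomial (Fin s) K ⧸ C.edgeIdeal K) :=
      Ideal.Quotient.subsingleton_iff.mpr htop
    have hone_not : (1 : MvPolynomial (Fin s) K) ∉
        Ideal.span (Set.range (X : Fin s → MvPolynomial (Fin s) K)) := by
      rw [← Set.image_univ, mem_ideal_span_X_image]
      intro h
      obtain ⟨i, -, hi⟩ := h 0 (mem_support_iff.mpr (by simp))
      simp at hi
    have hne : C.edgeIdeal K ≠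
        Ideal.span (Set.range (X : Fin s → MvPolynomial (Fin s) K)) := by
      intro heq
      exact hone_not (heq ▸ htop ▸ Submodule.mem_top)
    refine ⟨?_, by rw [hidom, hindep]⟩
    rw [vNumber, if_neg hne, hidom]
    have hset : {d : ℕ | 1 ≤ d ∧ ∃ f : MvPolynomial (Fin s) K, f.IsHomogeneous d ∧
        ∃ p ∈ associatedPrimes (MvPolynomial (Fin s) K)
          (MvPolynomial (Fin s) K ⧸ C.edgeIdeal K),
        Submodule.colon (C.edgeIdeal K) (Ideal.span {f}) = p} = ∅ := by
      rw [Set.eq_empty_iff_forall_notMem]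
      rintro d ⟨-, f, -, p, hp, -⟩
      exact not_isAssociatedPrime_of_subsingleton hp
    rw [hset, Nat.sInf_empty]
  · -- main case: the empty set is stable
    have hstable_empty : C.Stable ∅ := by
      intro e he hsub
      exact hempty (Finset.subset_empty.mp hsub ▸ he)
    -- a maximal stable set realizing the independent domination number
    have hSne : {n : ℕ | ∃ A : Finset (Fin s), C.MaximalStable A ∧ A.card = n}.Nonempty := by
      obtain ⟨A, hA, -⟩ := C.exists_maximalStable_superset ∅ hstable_empty
      exact ⟨A.card, A, hA, rfl⟩
    have hmemS : C.idomNum ∈ {n : ℕ | ∃ A : Finset (Fin s), C.MaximalStable A ∧ A.card = n} :=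
      Nat.sInf_mem hSne
    obtain ⟨A, hA, hcard⟩ := hmemS
    -- second inequality
    have hbdd : BddAbove {n : ℕ | ∃ A : Finset (Fin s), C.Stable A ∧ A.card = n} := by
      refine ⟨s, ?_⟩
      rintro n ⟨B, -, rfl⟩
      simpa using B.card_le_univ
    have hsecond : C.idomNum ≤ C.indepNum := by
      rw [← hcard]
      exact le_csSup hbdd ⟨A, hA.1, rfl⟩
    -- membership criterion for the edge ideal
    have hmemI : ∀ g : MvPolynomial (Fin s) K, g ∈ C.edgeIdeal K ↔
        ∀ m ∈ g.support, ∃ e ∈ C.edges, expSet e ≤ m := by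
      intro g
      rw [Clutter.edgeIdeal]
      have himg : ((fun e : Finset (Fin s) => ∏ i ∈ e, (X i : MvPolynomial (Fin s) K))
            '' ↑C.edges)
          = ((fun m => monomial m (1 : K)) '' (expSet '' ↑C.edges)) := by
        rw [Set.image_image]
        exact Set.image_congr fun e _ => prod_X_expSet e
      rw [himg, mem_ideal_span_monomial_image]
      simp only [Set.mem_image, Finset.mem_coe]
      constructor
      · intro h m hm
        obtain ⟨si, ⟨e, he, rfl⟩, hle⟩ := h m hm
        exact ⟨e, he, hle⟩
      · intro h m hm
        obtain ⟨e, he, hle⟩ := h m hm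
        exact ⟨expSet e, ⟨e, he, rfl⟩, hle⟩
    -- the edge ideal is not the ideal of variables
    have hprimeXuniv : (Ideal.span
        (Set.range (X : Fin s → MvPolynomial (Fin s) K))).IsPrime := by
      rw [← Set.image_univ]
      exact isPrime_span_X_image Set.univ
    have hne : C.edgeIdeal K ≠
        Ideal.span (Set.range (X : Fin s → MvPolynomial (Fin s) K)) := by
      intro heq
      exact hI (by rw [heq]; exact hprimeXuniv)
    -- the minimum maximal stable set is nonempty
    have hone : 1 ≤ C.idomNum := by
      by_contra h
      push_neg at h
      have hA0 : A = ∅ := Finset.card_eq_zero.mp (by omega)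
      have hsing : ∀ i : Fin s, {i} ∈ C.edges := by
        intro i
        by_cases hst : C.Stable {i}
        · have heq := hA.2 {i} hst (by rw [hA0]; exact Finset.empty_subset _)
          rw [hA0] at heq
          exact absurd heq.symm (Finset.singleton_ne_empty i)
        · rw [Clutter.Stable] at hst
          push_neg at hst
          obtain ⟨e, he, hsub⟩ := hst
          rcases Finset.subset_singleton_iff.mp hsub with rfl | rfl
          · exact absurd he hempty
          · exact he
      have hedges : ∀ e ∈ C.edges, ∃ i, e = {i} := by
        intro e he
        have hne' : e.Nonempty := Finset.nonempty_iff_ne_empty.mpr fun h0 => hempty (h0 ▸ he)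
        obtain ⟨i, hi⟩ := hne'
        exact ⟨i, (C.antichain {i} (hsing i) e he (Finset.singleton_subset_iff.mpr hi)).symm⟩
      have heq : C.edgeIdeal K =
          Ideal.span (Set.range (X : Fin s → MvPolynomial (Fin s) K)) := by
        rw [Clutter.edgeIdeal]
        congr 1
        ext q
        simp only [Set.mem_image, Finset.mem_coe, Set.mem_range]
        constructor
        · rintro ⟨e, he, rfl⟩
          obtain ⟨i, rfl⟩ := hedges e he
          exact ⟨i, by simp⟩
        · rintro ⟨i, rfl⟩
          exact ⟨{i}, hsing i, by simp⟩
      exact hne heq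
    -- the data for the v-number bound
    set f : MvPolynomial (Fin s) K := ∏ i ∈ A, X i with hf
    set p : Ideal (MvPolynomial (Fin s) K) :=
      Ideal.span ((X : Fin s → MvPolynomial (Fin s) K) '' {i | i ∉ A}) with hp
    have hpprime : p.IsPrime := isPrime_span_X_image _
    have hfhom : f.IsHomogeneous A.card := by
      have h := MvPolynomial.IsHomogeneous.prod A
        (fun i => (X i : MvPolynomial (Fin s) K)) (fun _ => 1)
        (fun i _ => isHomogeneous_X _ _)
      simpa using h
    have hcolon : Submodule.colon (C.edgeIdeal K) (Ideal.span {f}) = p := by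
      apply le_antisymm
      · intro g hg
        rw [Ideal.mem_colon_span_singleton] at hg
        by_contra hgp
        rw [hp, mem_ideal_span_X_image] at hgp
        push_neg at hgp
        obtain ⟨m, hm, hmA⟩ := hgp
        simp only [Set.mem_setOf_eq] at hmA
        have hsupp : m + expSet A ∈ (g * f).support := by
          rw [mem_support_iff, hf, prod_X_expSet, coeff_mul_monomial, mul_one]
          exact mem_support_iff.mp hm
        obtain ⟨e, he, hle⟩ := (hmemI _).mp hg _ hsupp
        refine hA.1 e he ?_
        intro i hi
        by_contra hiA
        have h1 : expSet e i = 1 := by rw [expSet_apply, if_pos hi]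
        have h2 := hle i
        rw [h1, Finsupp.add_apply, expSet_apply, if_neg hiA, hmA i hiA] at h2
        omega
      · rw [hp, Ideal.span_le]
        rintro x ⟨j, hj, rfl⟩
        simp only [Set.mem_setOf_eq] at hj
        rw [SetLike.mem_coe, Ideal.mem_colon_span_singleton]
        have hnotst : ¬ C.Stable (insert j A) := by
          intro hst
          have heq := hA.2 _ hst (Finset.subset_insert j A)
          exact hj (heq ▸ Finset.mem_insert_self j A)
        rw [Clutter.Stable] at hnotst
        push_neg at hnotst
        obtain ⟨e, he, hsub⟩ := hnotst
        have hprod : (X j : MvPolynomial (Fin s) K) * f = ∏ i ∈ insert j A, X i := by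
          rw [hf, Finset.prod_insert hj]
        rw [hprod, hmemI]
        intro m hm
        rw [prod_X_expSet, support_monomial, if_neg one_ne_zero, Finset.mem_singleton] at hm
        subst hm
        exact ⟨e, he, expSet_mono hsub⟩
    have hpassoc : p ∈ associatedPrimes (MvPolynomial (Fin s) K)
        (MvPolynomial (Fin s) K ⧸ C.edgeIdeal K) := by
      refine ⟨hpprime, Ideal.Quotient.mk (C.edgeIdeal K) f, ?_⟩
      rw [Submodule.bot_colon', annihilator_eq_colon, hcolon, hpprime.radical]
    refine ⟨?_, hsecond⟩
    rw [vNumber, if_neg hne]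
    refine Nat.sInf_le ?_
    exact ⟨hone, f, hcard ▸ hfhom, p, hpassoc, hcolon⟩
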